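/- Let N ≥ 1, let 1 ≤ v < N, and let p_1 ≥ p_2 ≥ … ≥ p_N be real numbers with 0 < p_i ≤ 1 for all i and p_{v+1} < p_v. Set Δ = p_{v+1}/p_v ∈ (0,1) and B = Σ_{i=v+1}^N (p_i / p_{v+1})^{K/2}. If K > 0 is a real number satisfying K ≥ 2 ln B / ln(1/Δ) (equivalently Δ^{−K/2} ≥ B), then p_v^{K/2} ≥ Σ_{i=v+1}^N p_i^{K/2}, and consequently Σ_{i=1}^N p_i^{K/2} ≤ v + 1 and Σ_{i=1}^N p_i^K ≤ v + 1 (all powers are real powers). -/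

import Mathlib

/-- Choosing the LSH power `K ≥ 2 ln B / ln(1/Δ)` (equivalently `Δ^{-K/2} ≥ B`), where
`Δ = p_{v+1}/p_v` and `B = ∑_{i=v+1}^N (p_i/p_{v+1})^{K/2}`, guarantees
`p_v^{K/2} ≥ ∑_{i=v+1}^N p_i^{K/2}` and hence `|s̃|₁ = ∑ p_i^{K/2} ≤ v + 1` and
`|s|₁ = ∑ p_i^K ≤ v + 1` (real powers). -/
theorem choose_K_sparsity (N v : ℕ) (hv : 1 ≤ v) (hvN : v < N)
    (p : ℕ → ℝ)
    (hpos : ∀ i, 1 ≤ i → i ≤ N → 0 < p i)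
    (hle1 : ∀ i, 1 ≤ i → i ≤ N → p i ≤ 1)
    (hmono : ∀ i j, 1 ≤ i → i ≤ j → j ≤ N → p j ≤ p i)
    (hgap : p (v + 1) < p v)
    (Δ B K : ℝ) (hΔ : Δ = p (v + 1) / p v)
    (hB : B = ∑ i ∈ Finset.Icc (v + 1) N, (p i / p (v + 1)) ^ (K / 2))
    (hK0 : 0 < K) (hK : 2 * Real.log B / Real.log (1 / Δ) ≤ K) :
    (∑ i ∈ Finset.Icc (v + 1) N, p i ^ (K / 2) ≤ p v ^ (K / 2)) ∧
    (∑ i ∈ Finset.Icc 1 N, p i ^ (K / 2) ≤ (v : ℝ) + 1) ∧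
    (∑ i ∈ Finset.Icc 1 N, p i ^ K ≤ (v : ℝ) + 1) := by
  have hv1N : v + 1 ≤ N := hvN
  have hvle : v ≤ N := le_of_lt hvN
  have hpv : 0 < p v := hpos v hv hvle
  have hpv1 : 0 < p (v + 1) := hpos (v + 1) (by omega) hv1N
  have hΔpos : 0 < Δ := by rw [hΔ]; exact div_pos hpv1 hpv
  have hΔlt1 : Δ < 1 := by rw [hΔ]; exact (div_lt_one hpv).mpr hgap
  have hK2 : 0 < K / 2 := by positivity
  -- B ≥ 1
  have hB1 : (1 : ℝ) ≤ B := by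
    rw [hB]
    have hmem : v + 1 ∈ Finset.Icc (v + 1) N := Finset.mem_Icc.mpr ⟨le_refl _, hv1N⟩
    have := Finset.single_le_sum (f := fun i => (p i / p (v + 1)) ^ (K / 2))
      (fun i hi => Real.rpow_nonneg (div_nonneg
        (le_of_lt (hpos i (by have := (Finset.mem_Icc.mp hi).1; omega) (Finset.mem_Icc.mp hi).2)) (le_of_lt hpv1)) _) hmem
    simpa [div_self (ne_of_gt hpv1)] using this
  have hBpos : 0 < B := lt_of_lt_of_le one_pos hB1
  have hlog : 0 < Real.log (1 / Δ) := Real.log_pos ((one_lt_div hΔpos).mpr hΔlt1)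
  -- B ≤ Δ^(-(K/2))
  have hBle : B ≤ Δ ^ (-(K / 2)) := by
    have h1 : 2 * Real.log B ≤ K * Real.log (1 / Δ) := by
      have := (div_le_iff₀ hlog).mp hK
      linarith
    have h2 : Real.log B ≤ (-(K / 2)) * Real.log Δ := by
      rw [Real.log_div one_ne_zero (ne_of_gt hΔpos), Real.log_one] at h1
      linarith
    have h3 : Real.log B ≤ Real.log (Δ ^ (-(K / 2))) := by
      rw [Real.log_rpow hΔpos]; exact h2
    exact (Real.log_le_log_iff hBpos (Real.rpow_pos_of_pos hΔpos _)).mp h3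
  have hBΔ : B * Δ ^ (K / 2) ≤ 1 := by
    have := mul_le_mul_of_nonneg_right hBle (le_of_lt (Real.rpow_pos_of_pos hΔpos (K / 2)))
    rwa [← Real.rpow_add hΔpos, neg_add_cancel, Real.rpow_zero] at this
  -- ∑ p_i^{K/2} over tail = B * p_{v+1}^{K/2}
  have hsum : ∑ i ∈ Finset.Icc (v + 1) N, p i ^ (K / 2) = B * p (v + 1) ^ (K / 2) := by
    rw [hB, Finset.sum_mul]
    apply Finset.sum_congr rfl
    intro i hi
    have hi' := Finset.mem_Icc.mp hi
    have hpi : 0 < p i := hpos i (by omega) hi'.2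
    rw [Real.div_rpow (le_of_lt hpi) (le_of_lt hpv1),
      div_mul_cancel₀ _ (ne_of_gt (Real.rpow_pos_of_pos hpv1 _))]
  have hpv1eq : p (v + 1) ^ (K / 2) = Δ ^ (K / 2) * p v ^ (K / 2) := by
    rw [← Real.mul_rpow (le_of_lt hΔpos) (le_of_lt hpv)]
    congr 1
    rw [hΔ]
    field_simp
  have main : ∑ i ∈ Finset.Icc (v + 1) N, p i ^ (K / 2) ≤ p v ^ (K / 2) := by
    rw [hsum, hpv1eq, ← mul_assoc]
    calc B * Δ ^ (K / 2) * p v ^ (K / 2) ≤ 1 * p v ^ (K / 2) :=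
          mul_le_mul_of_nonneg_right hBΔ (le_of_lt (Real.rpow_pos_of_pos hpv _))
      _ = p v ^ (K / 2) := one_mul _
  refine ⟨main, ?_, ?_⟩
  · have hsplit : ∑ i ∈ Finset.Icc 1 v, p i ^ (K / 2)
        + ∑ i ∈ Finset.Icc (v + 1) N, p i ^ (K / 2)
        = ∑ i ∈ Finset.Icc 1 N, p i ^ (K / 2) := by
      have e1 : Finset.Icc 1 v = Finset.Ioc 0 v := by rw [← Finset.Icc_add_one_left_eq_Ioc]; rfl
      have e2 : Finset.Icc (v + 1) N = Finset.Ioc v N := by rw [← Finset.Icc_add_one_left_eq_Ioc]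
      have e3 : Finset.Icc 1 N = Finset.Ioc 0 N := by rw [← Finset.Icc_add_one_left_eq_Ioc]; rfl
      rw [e1, e2, e3]
      exact Finset.sum_Ioc_consecutive _ (Nat.zero_le v) hvle
    have h1 : ∑ i ∈ Finset.Icc 1 v, p i ^ (K / 2) ≤ (v : ℝ) := by
      calc ∑ i ∈ Finset.Icc 1 v, p i ^ (K / 2) ≤ ∑ i ∈ Finset.Icc 1 v, (1 : ℝ) := by
            apply Finset.sum_le_sum
            intro i hi
            have hi' := Finset.mem_Icc.mp hi
            exact Real.rpow_le_one (le_of_lt (hpos i hi'.1 (le_trans hi'.2 hvle)))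
              (hle1 i hi'.1 (le_trans hi'.2 hvle)) (le_of_lt hK2)
        _ = (v : ℝ) := by simp
    have h2 : p v ^ (K / 2) ≤ 1 :=
      Real.rpow_le_one (le_of_lt hpv) (hle1 v hv hvle) (le_of_lt hK2)
    linarith [hsplit, main]
  · have hKK : ∀ i ∈ Finset.Icc 1 N, p i ^ K ≤ p i ^ (K / 2) := by
      intro i hi
      have hi' := Finset.mem_Icc.mp hi
      exact Real.rpow_le_rpow_of_exponent_ge (hpos i hi'.1 hi'.2) (hle1 i hi'.1 hi'.2)
        (by linarith)
    have hsplit : ∑ i ∈ Finset.Icc 1 v, p i ^ (K / 2)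
        + ∑ i ∈ Finset.Icc (v + 1) N, p i ^ (K / 2)
        = ∑ i ∈ Finset.Icc 1 N, p i ^ (K / 2) := by
      have e1 : Finset.Icc 1 v = Finset.Ioc 0 v := by rw [← Finset.Icc_add_one_left_eq_Ioc]; rfl
      have e2 : Finset.Icc (v + 1) N = Finset.Ioc v N := by rw [← Finset.Icc_add_one_left_eq_Ioc]
      have e3 : Finset.Icc 1 N = Finset.Ioc 0 N := by rw [← Finset.Icc_add_one_left_eq_Ioc]; rfl
      rw [e1, e2, e3]
      exact Finset.sum_Ioc_consecutive _ (Nat.zero_le v) hvle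
    have h1 : ∑ i ∈ Finset.Icc 1 v, p i ^ (K / 2) ≤ (v : ℝ) := by
      calc ∑ i ∈ Finset.Icc 1 v, p i ^ (K / 2) ≤ ∑ i ∈ Finset.Icc 1 v, (1 : ℝ) := by
            apply Finset.sum_le_sum
            intro i hi
            have hi' := Finset.mem_Icc.mp hi
            exact Real.rpow_le_one (le_of_lt (hpos i hi'.1 (le_trans hi'.2 hvle)))
              (hle1 i hi'.1 (le_trans hi'.2 hvle)) (le_of_lt hK2)
        _ = (v : ℝ) := by simp
    have h2 : p v ^ (K / 2) ≤ 1 :=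
      Real.rpow_le_one (le_of_lt hpv) (hle1 v hv hvle) (le_of_lt hK2)
    calc ∑ i ∈ Finset.Icc 1 N, p i ^ K ≤ ∑ i ∈ Finset.Icc 1 N, p i ^ (K / 2) :=
          Finset.sum_le_sum hKK
      _ ≤ (v : ℝ) + 1 := by linarith [hsplit, main]
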